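/- arXiv:2110.11849 — 3 statements merged into one kernel-verified Lean document; each statement's English description precedes it below -/
import Mathlib

section
/- For every real number p with 1 < p ≤ 2 there exists a constant C > 0 such that for all vectors x, y in ℝ^N, one has 0 ≤ ⟨|x|^{p-2}x − |y|^{p-2}y, x − y⟩ ≤ C|x − y|^p, where |·| denotes the Euclidean norm and the expression |z|^{p-2}z is interpreted as 0 when z = 0. -/
open scoped RealInnerProductSpace

private lemma rpow_mul_self' {p a : ℝ} (hp1 : 1 < p) (ha : 0 ≤ a) :
    a ^ (p - 2) * a = a ^ (p - 1) := by
  rcases eq_or_lt_of_le ha with h | h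
  · simp [← h, Real.zero_rpow (by linarith : p - 1 ≠ 0)]
  · rw [← Real.rpow_add_one (ne_of_gt h)]; congr 1; ring

private lemma rpow_sub_one_mul' {p a : ℝ} (hp1 : 1 < p) (ha : 0 ≤ a) :
    a ^ (p - 1) * a = a ^ p := by
  rcases eq_or_lt_of_le ha with h | h
  · simp [← h, Real.zero_rpow (by linarith : p ≠ 0),
      Real.zero_rpow (by linarith : p - 1 ≠ 0)]
  · rw [← Real.rpow_add_one (ne_of_gt h)]; congr 1; ring

private lemma rpow_mul_sq' {p a : ℝ} (hp1 : 1 < p) (ha : 0 ≤ a) :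
    a ^ (p - 2) * a ^ 2 = a ^ p := by
  rcases eq_or_lt_of_le ha with h | h
  · simp [← h, Real.zero_rpow (by linarith : p ≠ 0)]
  · rw [← Real.rpow_natCast a 2, ← Real.rpow_add h]; norm_num

private lemma expand_inner {N : ℕ} (p : ℝ) (x y : EuclideanSpace ℝ (Fin N)) :
    ⟪(‖x‖ ^ (p - 2)) • x - (‖y‖ ^ (p - 2)) • y, x - y⟫ =
      ‖x‖ ^ (p - 2) * ‖x‖ ^ 2 + ‖y‖ ^ (p - 2) * ‖y‖ ^ 2
        - (‖x‖ ^ (p - 2) + ‖y‖ ^ (p - 2)) * ⟪x, y⟫ := by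
  rw [inner_sub_left, inner_sub_right, inner_sub_right, real_inner_smul_left,
    real_inner_smul_left, real_inner_smul_left, real_inner_smul_left,
    real_inner_self_eq_norm_sq, real_inner_self_eq_norm_sq, real_inner_comm y x]
  ring

private lemma lower_bd {N : ℕ} (p : ℝ) (hp1 : 1 < p) (x y : EuclideanSpace ℝ (Fin N)) :
    0 ≤ ⟪(‖x‖ ^ (p - 2)) • x - (‖y‖ ^ (p - 2)) • y, x - y⟫ := by
  rw [expand_inner]
  set a := ‖x‖ with ha'
  set b := ‖y‖ with hb'
  have ha : 0 ≤ a := norm_nonneg x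
  have hb : 0 ≤ b := norm_nonneg y
  have hs : ⟪x, y⟫ ≤ a * b := real_inner_le_norm x y
  have hαβ : 0 ≤ a ^ (p - 2) + b ^ (p - 2) :=
    add_nonneg (Real.rpow_nonneg ha _) (Real.rpow_nonneg hb _)
  have key : 0 ≤ (a ^ (p - 1) - b ^ (p - 1)) * (a - b) := by
    rcases le_total a b with h | h
    · have h1 : a ^ (p - 1) ≤ b ^ (p - 1) := Real.rpow_le_rpow ha h (by linarith)
      nlinarith
    · exact mul_nonneg (by simpa using Real.rpow_le_rpow hb h (by linarith)) (by linarith)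
  have h1 : a ^ (p - 1) = a ^ (p - 2) * a := (rpow_mul_self' hp1 ha).symm
  have h2 : b ^ (p - 1) = b ^ (p - 2) * b := (rpow_mul_self' hp1 hb).symm
  nlinarith [mul_le_mul_of_nonneg_left hs hαβ, sq_nonneg a, sq_nonneg b]

private lemma upper_bd {N : ℕ} (p : ℝ) (hp1 : 1 < p) (hp2 : p ≤ 2)
    (x y : EuclideanSpace ℝ (Fin N)) (hba : ‖y‖ ≤ ‖x‖) :
    ⟪(‖x‖ ^ (p - 2)) • x - (‖y‖ ^ (p - 2)) • y, x - y⟫ ≤ (2:ℝ) ^ p * ‖x - y‖ ^ p := by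
  set a := ‖x‖ with ha'
  set b := ‖y‖ with hb'
  set d := ‖x - y‖ with hd'
  have ha : 0 ≤ a := norm_nonneg x
  have hb : 0 ≤ b := norm_nonneg y
  have hd : 0 ≤ d := norm_nonneg _
  have hdp : 0 ≤ d ^ p := Real.rpow_nonneg hd _
  rcases le_or_gt a (2 * d) with hc | hc
  · -- a ≤ 2d : crude Cauchy–Schwarz bound
    have h1 : ⟪(a ^ (p - 2)) • x - (b ^ (p - 2)) • y, x - y⟫ ≤
        ‖(a ^ (p - 2)) • x - (b ^ (p - 2)) • y‖ * d := real_inner_le_norm _ _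
    have h2 : ‖(a ^ (p - 2)) • x - (b ^ (p - 2)) • y‖ ≤ a ^ (p - 1) + b ^ (p - 1) := by
      refine (norm_sub_le _ _).trans ?_
      rw [norm_smul, norm_smul, Real.norm_of_nonneg (Real.rpow_nonneg ha _),
        Real.norm_of_nonneg (Real.rpow_nonneg hb _), ← ha', ← hb',
        rpow_mul_self' hp1 ha, rpow_mul_self' hp1 hb]
    have hb1 : b ^ (p - 1) ≤ a ^ (p - 1) := Real.rpow_le_rpow hb hba (by linarith)
    have ha1 : a ^ (p - 1) ≤ 2 ^ (p - 1) * d ^ (p - 1) := by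
      rw [← Real.mul_rpow (by norm_num) hd]
      exact Real.rpow_le_rpow ha hc (by linarith)
    have h3 : ⟪(a ^ (p - 2)) • x - (b ^ (p - 2)) • y, x - y⟫ ≤
        2 * (2 ^ (p - 1) * d ^ (p - 1)) * d := by
      calc _ ≤ (a ^ (p - 1) + b ^ (p - 1)) * d := h1.trans (by
              exact mul_le_mul_of_nonneg_right h2 hd)
        _ ≤ 2 * (2 ^ (p - 1) * d ^ (p - 1)) * d := by nlinarith
    refine h3.trans (le_of_eq ?_)
    have h2p : (2:ℝ) ^ p = 2 ^ (p - 1) * 2 := by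
      rw [← Real.rpow_add_one (by norm_num : (2:ℝ) ≠ 0)]; ring_nf
    rw [h2p, ← rpow_sub_one_mul' hp1 hd]
    ring
  · -- 2d < a : use the identity
    have hab : a - b ≤ d := by
      have := abs_norm_sub_norm_le x y
      rw [← ha', ← hb', ← hd'] at this
      exact (abs_le.mp this).2
    have hdb : d < b := by linarith
    have hb0 : 0 < b := lt_of_le_of_lt hd hdb
    have ha0 : 0 < a := lt_of_lt_of_le hb0 hba
    have hβα : a ^ (p - 2) ≤ b ^ (p - 2) :=
      Real.rpow_le_rpow_of_nonpos hb0 hba (by linarith)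
    have hd2 : d ^ 2 = a ^ 2 - 2 * ⟪x, y⟫ + b ^ 2 := norm_sub_sq_real x y
    have hE : ⟪(a ^ (p - 2)) • x - (b ^ (p - 2)) • y, x - y⟫ =
        (a ^ 2 - b ^ 2) * (a ^ (p - 2) - b ^ (p - 2)) / 2
          + (a ^ (p - 2) + b ^ (p - 2)) * d ^ 2 / 2 := by
      rw [expand_inner, rpow_mul_sq' hp1 ha, rpow_mul_sq' hp1 hb]
      have h1 : a ^ (p - 2) * a ^ 2 = a ^ p := rpow_mul_sq' hp1 ha
      have h2 : b ^ (p - 2) * b ^ 2 = b ^ p := rpow_mul_sq' hp1 hb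
      rw [← h1, ← h2]
      linear_combination (-(a ^ (p - 2) + b ^ (p - 2)) / 2) * hd2
    rw [hE]
    have hβ : 0 ≤ b ^ (p - 2) := Real.rpow_nonneg hb _
    have t1 : (a ^ 2 - b ^ 2) * (a ^ (p - 2) - b ^ (p - 2)) / 2 ≤ 0 := by
      have hsq : b ^ 2 ≤ a ^ 2 := by nlinarith
      nlinarith [mul_nonneg (sub_nonneg.2 hsq) (sub_nonneg.2 hβα)]
    have t2 : (a ^ (p - 2) + b ^ (p - 2)) * d ^ 2 / 2 ≤ b ^ (p - 2) * d ^ 2 := by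
      nlinarith [sq_nonneg d]
    have t3 : b ^ (p - 2) * d ^ 2 ≤ d ^ p := by
      rcases eq_or_lt_of_le hd with h0 | h0
      · simp [← h0, Real.zero_rpow (by linarith : p ≠ 0)]
      · calc b ^ (p - 2) * d ^ 2 ≤ d ^ (p - 2) * d ^ 2 :=
              mul_le_mul_of_nonneg_right
                (Real.rpow_le_rpow_of_nonpos h0 hdb.le (by linarith)) (sq_nonneg d)
          _ = d ^ p := rpow_mul_sq' hp1 hd
    have h2p : (1:ℝ) ≤ 2 ^ p := Real.one_le_rpow one_le_two (by linarith)
    nlinarith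

/-- For `1 < p ≤ 2` there is `C > 0` such that for all `x, y ∈ ℝ^N`,
`0 ≤ ⟨|x|^{p-2}x − |y|^{p-2}y, x − y⟩ ≤ C |x − y|^p`, where `|z|^{p-2}z := 0` at `z = 0`
(this convention is automatic here since `0 ^ (p-2) = 0` for real rpow and `c • 0 = 0`). -/
theorem stmt_0 (p : ℝ) (hp1 : 1 < p) (hp2 : p ≤ 2) (N : ℕ) (hN : 1 ≤ N) :
    ∃ C : ℝ, 0 < C ∧ ∀ x y : EuclideanSpace ℝ (Fin N),
      0 ≤ ⟪(‖x‖ ^ (p - 2)) • x - (‖y‖ ^ (p - 2)) • y, x - y⟫ ∧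
      ⟪(‖x‖ ^ (p - 2)) • x - (‖y‖ ^ (p - 2)) • y, x - y⟫ ≤ C * ‖x - y‖ ^ p := by
  refine ⟨2 ^ p, Real.rpow_pos_of_pos (by norm_num) p, fun x y => ⟨lower_bd p hp1 x y, ?_⟩⟩
  rcases le_total ‖y‖ ‖x‖ with h | h
  · exact upper_bd p hp1 hp2 x y h
  · have hsymm : ⟪(‖x‖ ^ (p - 2)) • x - (‖y‖ ^ (p - 2)) • y, x - y⟫ =
        ⟪(‖y‖ ^ (p - 2)) • y - (‖x‖ ^ (p - 2)) • x, y - x⟫ := by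
      rw [← inner_neg_neg]; congr 1 <;> abel
    rw [hsymm, norm_sub_rev]
    exact upper_bd p hp1 hp2 y x h
end

section
/- Suppose ∫_Ω a φ_p^q dx > 0. Then M(λ*) = −∞; that is, the infimum of I_{λ*} over the Nehari manifold N_{λ*} equals −∞. More precisely, taking w_ε = φ_p + ε θ with θ ∈ W₀^{1,p} \ ℝφ_p, one has E_{λ*}(w_ε) > 0 for small ε ≠ 0, ∫_Ω a|w_ε|^q dx → ∫_Ω a φ_p^q dx > 0, E_{λ*}(w_ε) → 0 as ε → 0, and consequently J_{λ*}(w_ε) = −((p−q)/(pq)) (∫_Ω a|w_ε|^q dx)^{p/(p−q)} / E_{λ*}(w_ε)^{q/(p−q)} → −∞. -/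
open MeasureTheory Filter Topology

private lemma fderiv_cmul {E : Type*} [NormedAddCommGroup E] [NormedSpace ℝ E]
    (t : ℝ) (w : E → ℝ) (x : E) :
    fderiv ℝ (fun y => t * w y) x = t • fderiv ℝ w x := by
  by_cases ht : t = 0
  · simp [ht]
  · by_cases hw : DifferentiableAt ℝ w x
    · exact fderiv_const_mul hw t
    · rw [fderiv_zero_of_not_differentiableAt hw,
        fderiv_zero_of_not_differentiableAt, smul_zero]
      intro h
      exact hw (by simpa [← mul_assoc, inv_mul_cancel₀ ht] using h.const_mul t⁻¹)

/-- If `∫_Ω a φ_p^q dx > 0`, then `M(λ*) = −∞`: the infimum of `I_{λ*}` over the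
Nehari manifold `N_{λ*}` is `−∞`. More precisely, for `w_ε = φ_p + ε θ` with
`θ ∈ W₀^{1,p} \ ℝφ_p`, one has `E_{λ*}(w_ε) > 0` for small `ε ≠ 0`,
`∫_Ω a|w_ε|^q → ∫_Ω a φ_p^q > 0` and `E_{λ*}(w_ε) → 0` as `ε → 0`, and consequently
`J_{λ*}(w_ε) = −((p−q)/(pq)) (∫_Ω a|w_ε|^q)^{p/(p−q)} / E_{λ*}(w_ε)^{q/(p−q)} → −∞`.
Here `W₀^{1,p}(Ω)` is modelled by an abstract linear set of functions `W` containing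
the first eigenfunction `φ_p` (with simple eigenvalue `λ* = λ₁(p)`, encoded by
`E_{λ*} ≥ 0` on `W`, vanishing only on `ℝφ_p`). -/
theorem stmt_14 (N : ℕ) (p q lamStar : ℝ) (hq : 1 < q) (hqp : q < p)
    (Ω : Set (EuclideanSpace ℝ (Fin N)))
    (a φp : EuclideanSpace ℝ (Fin N) → ℝ)
    (W : Set (EuclideanSpace ℝ (Fin N) → ℝ))
    (Efun Afun Ifun : (EuclideanSpace ℝ (Fin N) → ℝ) → ℝ)
    (hEdef : ∀ u, Efun u
      = (∫ x in Ω, ‖fderiv ℝ u x‖ ^ p) - lamStar * ∫ x in Ω, |u x| ^ p)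
    (hAdef : ∀ u, Afun u = ∫ x in Ω, a x * |u x| ^ q)
    (hIdef : ∀ u, Ifun u = (1 / p) * Efun u - (1 / q) * Afun u)
    -- `W` is a linear space of functions:
    (hlin : ∀ u ∈ W, ∀ v ∈ W, ∀ s t : ℝ, (fun x => s * u x + t * v x) ∈ W)
    -- `φ_p` is the positive first eigenfunction and `λ* = λ₁(p)`:
    (hφW : φp ∈ W) (hφpos : ∀ x ∈ Ω, 0 < φp x)
    (hEφ : Efun φp = 0)
    (hEnonneg : ∀ u ∈ W, 0 ≤ Efun u)
    -- simplicity of `λ₁(p)`: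
    (hsimple : ∀ u ∈ W, Efun u = 0 → ∃ t : ℝ, u = fun x => t * φp x)
    -- the sign assumption `∫_Ω a φ_p^q dx > 0`:
    (hAφ : 0 < Afun φp)
    -- `W` contains functions outside `ℝφ_p`:
    (hbig : ∃ θ ∈ W, ∀ t : ℝ, θ ≠ fun x => t * φp x)
    -- continuity of the perturbed functionals in `ε`:
    (hcontA : ∀ θ ∈ W, Continuous fun ε : ℝ => Afun fun x => φp x + ε * θ x)
    (hcontE : ∀ θ ∈ W, Continuous fun ε : ℝ => Efun fun x => φp x + ε * θ x) :
    -- behavior along the perturbations `w_ε = φ_p + ε θ`: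
    (∀ θ ∈ W, (∀ t : ℝ, θ ≠ fun x => t * φp x) →
      (∀ᶠ ε in 𝓝[≠] (0 : ℝ), 0 < Efun fun x => φp x + ε * θ x) ∧
      Tendsto (fun ε : ℝ => Afun fun x => φp x + ε * θ x) (𝓝[≠] 0) (nhds (Afun φp)) ∧
      Tendsto (fun ε : ℝ => Efun fun x => φp x + ε * θ x) (𝓝[≠] 0) (nhds 0) ∧
      Tendsto (fun ε : ℝ =>
          -((p - q) / (p * q)) * (Afun fun x => φp x + ε * θ x) ^ (p / (p - q)) /
            (Efun fun x => φp x + ε * θ x) ^ (q / (p - q)))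
        (𝓝[≠] 0) atBot) ∧
    -- `M(λ*) = −∞`:
    (∀ R : ℝ, ∃ u ∈ W, u ≠ 0 ∧ Efun u = Afun u ∧ Ifun u < R) := by
  have hq0 : (0:ℝ) < q := lt_trans one_pos hq
  have hp0 : (0:ℝ) < p := lt_trans hq0 hqp
  have hd0 : (0:ℝ) < p - q := sub_pos.2 hqp
  -- homogeneity of E and A
  have hE_hom : ∀ (u : EuclideanSpace ℝ (Fin N) → ℝ) (t : ℝ),
      Efun (fun x => t * u x) = |t| ^ p * Efun u := by
    intro u t
    rw [hEdef, hEdef]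
    have h1 : ∀ x, ‖fderiv ℝ (fun y => t * u y) x‖ ^ p = |t| ^ p * ‖fderiv ℝ u x‖ ^ p := by
      intro x
      rw [fderiv_cmul, norm_smul, Real.norm_eq_abs,
        Real.mul_rpow (abs_nonneg _) (norm_nonneg _)]
    have h2 : ∀ x, |t * u x| ^ p = |t| ^ p * |u x| ^ p := by
      intro x
      rw [abs_mul, Real.mul_rpow (abs_nonneg _) (abs_nonneg _)]
    simp only [h1, h2, integral_const_mul]
    ring
  have hA_hom : ∀ (u : EuclideanSpace ℝ (Fin N) → ℝ) (t : ℝ),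
      Afun (fun x => t * u x) = |t| ^ q * Afun u := by
    intro u t
    rw [hAdef, hAdef]
    have h2 : ∀ x, a x * |t * u x| ^ q = |t| ^ q * (a x * |u x| ^ q) := by
      intro x
      rw [abs_mul, Real.mul_rpow (abs_nonneg _) (abs_nonneg _)]
      ring
    simp only [h2, integral_const_mul]
  -- the main claims along the perturbations
  have key : ∀ θ ∈ W, (∀ t : ℝ, θ ≠ fun x => t * φp x) →
      (∀ᶠ ε in 𝓝[≠] (0 : ℝ), 0 < Efun fun x => φp x + ε * θ x) ∧
      Tendsto (fun ε : ℝ => Afun fun x => φp x + ε * θ x) (𝓝[≠] 0) (nhds (Afun φp)) ∧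
      Tendsto (fun ε : ℝ => Efun fun x => φp x + ε * θ x) (𝓝[≠] 0) (nhds 0) ∧
      Tendsto (fun ε : ℝ =>
          -((p - q) / (p * q)) * (Afun fun x => φp x + ε * θ x) ^ (p / (p - q)) /
            (Efun fun x => φp x + ε * θ x) ^ (q / (p - q)))
        (𝓝[≠] 0) atBot := by
    intro θ hθW hθ
    have hmem : ∀ ε : ℝ, (fun x => φp x + ε * θ x) ∈ W := by
      intro ε
      have := hlin φp hφW θ hθW 1 ε
      simpa using this
    have hEpos : ∀ ε : ℝ, ε ≠ 0 → 0 < Efun fun x => φp x + ε * θ x := by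
      intro ε hε
      rcases (hEnonneg _ (hmem ε)).lt_or_eq with h | h
      · exact h
      · exfalso
        obtain ⟨t, ht⟩ := hsimple _ (hmem ε) h.symm
        apply hθ ((t - 1) / ε)
        funext x
        have hx := congrFun ht x
        field_simp
        linarith [hx]
    have hEposF : ∀ᶠ ε in 𝓝[≠] (0 : ℝ), 0 < Efun fun x => φp x + ε * θ x :=
      Filter.eventually_of_mem self_mem_nhdsWithin (fun ε hε => hEpos ε hε)
    have h0 : (fun x => φp x + (0:ℝ) * θ x) = φp := funext fun x => by ring
    have hAtend : Tendsto (fun ε : ℝ => Afun fun x => φp x + ε * θ x) (𝓝 0)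
        (𝓝 (Afun φp)) := by
      have h := (hcontA θ hθW).tendsto 0
      rwa [h0] at h
    have hEtend : Tendsto (fun ε : ℝ => Efun fun x => φp x + ε * θ x) (𝓝 0)
        (𝓝 (0:ℝ)) := by
      have h := (hcontE θ hθW).tendsto 0
      rwa [h0, hEφ] at h
    have hAtend' : Tendsto (fun ε : ℝ => Afun fun x => φp x + ε * θ x) (𝓝[≠] 0)
        (𝓝 (Afun φp)) := hAtend.mono_left nhdsWithin_le_nhds
    have hEtend' : Tendsto (fun ε : ℝ => Efun fun x => φp x + ε * θ x) (𝓝[≠] 0)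
        (𝓝 (0:ℝ)) := hEtend.mono_left nhdsWithin_le_nhds
    refine ⟨hEposF, hAtend', hEtend', ?_⟩
    -- the blow-up of J
    set r : ℝ := p / (p - q)
    set s : ℝ := q / (p - q)
    have hs0 : 0 < s := div_pos hq0 hd0
    have hnum : Tendsto (fun ε : ℝ =>
        -((p - q) / (p * q)) * (Afun fun x => φp x + ε * θ x) ^ r)
        (𝓝[≠] 0) (𝓝 (-((p - q) / (p * q)) * (Afun φp) ^ r)) := by
      exact (((Real.continuousAt_rpow_const _ r (Or.inl hAφ.ne')).tendsto.comp
        hAtend').const_mul _)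
    have hden : Tendsto (fun ε : ℝ =>
        ((Efun fun x => φp x + ε * θ x) ^ s)⁻¹) (𝓝[≠] 0) atTop := by
      apply tendsto_inv_nhdsGT_zero.comp
      rw [tendsto_nhdsWithin_iff]
      constructor
      · have := (Real.continuousAt_rpow_const 0 s (Or.inr hs0.le)).tendsto.comp hEtend'
        simpa [Real.zero_rpow hs0.ne', Function.comp_def] using this
      · exact hEposF.mono fun ε hε => Real.rpow_pos_of_pos hε s
    have hCneg : -((p - q) / (p * q)) * (Afun φp) ^ r < 0 := by
      apply mul_neg_of_neg_of_pos
      · have : 0 < (p - q) / (p * q) := div_pos hd0 (mul_pos hp0 hq0)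
        linarith
      · exact Real.rpow_pos_of_pos hAφ r
    have := Tendsto.neg_mul_atTop hCneg hnum hden
    simpa [div_eq_mul_inv] using this
  refine ⟨key, ?_⟩
  -- M(λ*) = −∞
  obtain ⟨θ, hθW, hθ⟩ := hbig
  obtain ⟨hEposF, hAtend, hEtend, hJ⟩ := key θ hθW hθ
  intro R
  have hApos : ∀ᶠ ε in 𝓝[≠] (0:ℝ), 0 < Afun fun x => φp x + ε * θ x :=
    hAtend.eventually (eventually_gt_nhds hAφ)
  have hlt : ∀ᶠ ε in 𝓝[≠] (0:ℝ),
      -((p - q) / (p * q)) * (Afun fun x => φp x + ε * θ x) ^ (p / (p - q)) /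
        (Efun fun x => φp x + ε * θ x) ^ (q / (p - q)) < R :=
    hJ.eventually (eventually_lt_atBot R)
  obtain ⟨ε, hE, hA, hJR⟩ := ((hEposF.and (hApos.and hlt)).exists : _)
  set w : EuclideanSpace ℝ (Fin N) → ℝ := fun x => φp x + ε * θ x with hw_def
  have hwW : w ∈ W := by
    have := hlin φp hφW θ hθW 1 ε
    simpa using this
  set Ew := Efun w with hEw_def
  set Aw := Afun w with hAw_def
  have hEwpos : 0 < Ew := hE
  have hAwpos : 0 < Aw := hA
  set t : ℝ := (Aw / Ew) ^ (p - q)⁻¹ with ht_def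
  have htpos : 0 < t := Real.rpow_pos_of_pos (div_pos hAwpos hEwpos) _
  set u : EuclideanSpace ℝ (Fin N) → ℝ := fun x => t * w x with hu_def
  have huW : u ∈ W := by
    have := hlin φp hφW θ hθW t (t * ε)
    have heq : (fun x => t * φp x + t * ε * θ x) = u := by
      funext x; simp only [hu_def, hw_def]; ring
    rwa [heq] at this
  have habs : |t| = t := abs_of_pos htpos
  have hEu : Efun u = t ^ p * Ew := by rw [hu_def, hE_hom, habs]
  have hAu : Afun u = t ^ q * Aw := by rw [hu_def, hA_hom, habs]
  -- t^(p-q) = Aw/Ew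
  have htd : t ^ (p - q) = Aw / Ew := by
    rw [ht_def, ← Real.rpow_mul (div_pos hAwpos hEwpos).le,
      inv_mul_cancel₀ hd0.ne', Real.rpow_one]
  have htp : t ^ p = t ^ q * (Aw / Ew) := by
    rw [← htd, ← Real.rpow_add htpos]
    ring_nf
  have hEuAu : Efun u = Afun u := by
    rw [hEu, hAu, htp]
    field_simp
  have huNe : u ≠ 0 := by
    intro h
    have hA0 : Afun u = 0 := by
      rw [h, hAdef]
      simp [Real.zero_rpow hq0.ne']
    rw [hAu] at hA0
    have : 0 < t ^ q * Aw := mul_pos (Real.rpow_pos_of_pos htpos q) hAwpos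
    linarith
  refine ⟨u, huW, huNe, hEuAu, ?_⟩
  -- Ifun u = J(ε)
  have hIu : Ifun u = -((p - q) / (p * q)) * Aw ^ (p / (p - q)) / Ew ^ (q / (p - q)) := by
    rw [hIdef, ← hEuAu, hEu]
    have htpE : t ^ p * Ew = Aw ^ (p / (p - q)) / Ew ^ (q / (p - q)) := by
      have h1 : t ^ p = (Aw / Ew) ^ (p / (p - q)) := by
        rw [ht_def, ← Real.rpow_mul (div_pos hAwpos hEwpos).le]
        congr 1
        field_simp
      have h2 : (Aw / Ew) ^ (p / (p - q)) = Aw ^ (p / (p - q)) / Ew ^ (p / (p - q)) :=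
        Real.div_rpow hAwpos.le hEwpos.le _
      have h3 : Ew ^ (p / (p - q)) = Ew ^ (q / (p - q)) * Ew := by
        have hx : p / (p - q) = q / (p - q) + 1 := by
          field_simp
          ring
        rw [hx, Real.rpow_add hEwpos, Real.rpow_one]
      rw [h1, h2, h3]
      field_simp
    rw [htpE]
    have hEq : Ew ^ (q / (p - q)) ≠ 0 := (Real.rpow_pos_of_pos hEwpos _).ne'
    field_simp
    ring
  rw [hIu]
  exact hJR
end

section
/- Let 1 < q < p and λ ∈ ℝ. If E_λ(u) > 0 and ∫_Ω a|u|^q dx > 0 for some u ∈ W₀^{1,p}(Ω), then t_λ(u)·u ∈ N_λ ∩ A⁺, where t_λ(u) = (∫_Ω a|u|^q dx / E_λ(u))^{1/(p−q)}; moreover I_λ(t_λ(u)u) = min_{t>0} I_λ(tu) ≤ I_λ(u), with I_λ(t_λ(u)u) < 0. -/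
open MeasureTheory

lemma key_ineq {p q s : ℝ} (hq : 0 < q) (hqp : q < p) (hs : 0 ≤ s) :
    1/p - 1/q ≤ s^p/p - s^q/q := by
  have hp : 0 < p := hq.trans hqp
  have hconj : (p/q).HolderConjugate (p/(p-q)) := by
    rw [Real.holderConjugate_iff_eq_conjExponent (by rw [lt_div_iff₀ hq]; linarith)]
    have hpq' : p - q ≠ 0 := by linarith
    rw [div_sub_one hq.ne', div_div_div_cancel_right₀ hq.ne']
  have hY := Real.young_inequality_of_nonneg (Real.rpow_nonneg hs q) zero_le_one hconj
  rw [mul_one, Real.one_rpow, ← Real.rpow_mul hs] at hY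
  have hqpq : q * (p / q) = p := by field_simp
  rw [hqpq] at hY
  have h1 : s ^ p / (p/q) = s^p * q / p := by field_simp
  have h2 : (1:ℝ) / (p/(p-q)) = (p-q)/p := by field_simp
  rw [h1, h2] at hY
  have hY' : s^q * p ≤ s^p * q + (p - q) := by
    have := mul_le_mul_of_nonneg_right hY hp.le
    field_simp at this
    linarith
  rw [div_sub_div _ _ hp.ne' hq.ne', div_sub_div _ _ hp.ne' hq.ne',
    div_le_div_iff₀ (by positivity) (by positivity)]
  nlinarith [mul_le_mul_of_nonneg_right hY' (mul_pos hp hq).le]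

lemma fderiv_const_mul_fun {E : Type*} [NormedAddCommGroup E] [NormedSpace ℝ E]
    (u : E → ℝ) (t : ℝ) (ht : t ≠ 0) (x : E) :
    fderiv ℝ (fun y => t * u y) x = t • fderiv ℝ u x := by
  by_cases hd : DifferentiableAt ℝ u x
  · exact fderiv_const_mul hd t
  · have hd2 : ¬ DifferentiableAt ℝ (fun y => t * u y) x := by
      intro h
      have h2 := h.const_mul t⁻¹
      have : (fun y => t⁻¹ * (t * u y)) = u := by
        funext y; rw [inv_mul_cancel_left₀ ht]
      rw [this] at h2
      exact hd h2
    rw [fderiv_zero_of_not_differentiableAt hd, fderiv_zero_of_not_differentiableAt hd2,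
      smul_zero]

/-- If `E_λ(u) > 0` and `∫_Ω a|u|^q > 0`, then with
`t₀ = t_λ(u) = (∫_Ω a|u|^q / E_λ(u))^{1/(p−q)}`, the function `t₀·u` belongs to
`N_λ ∩ A⁺` (it is nonzero, satisfies the Nehari identity, and has positive weight
integral); moreover `I_λ(t₀ u) = min_{t>0} I_λ(tu) ≤ I_λ(u)` and `I_λ(t₀ u) < 0`. -/
theorem stmt_19 (N : ℕ) (p q lam : ℝ) (hq : 1 < q) (hqp : q < p)
    (Ω : Set (EuclideanSpace ℝ (Fin N)))
    (a u : EuclideanSpace ℝ (Fin N) → ℝ) :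
    let Efun : (EuclideanSpace ℝ (Fin N) → ℝ) → ℝ := fun w =>
      (∫ x in Ω, ‖fderiv ℝ w x‖ ^ p) - lam * ∫ x in Ω, |w x| ^ p
    let Afun : (EuclideanSpace ℝ (Fin N) → ℝ) → ℝ := fun w =>
      ∫ x in Ω, a x * |w x| ^ q
    let Ifun : (EuclideanSpace ℝ (Fin N) → ℝ) → ℝ := fun w =>
      (1 / p) * Efun w - (1 / q) * Afun w
    0 < Efun u → 0 < Afun u →
    let t₀ : ℝ := (Afun u / Efun u) ^ (1 / (p - q))
    let tu : ℝ → EuclideanSpace ℝ (Fin N) → ℝ := fun t x => t * u x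
    tu t₀ ≠ 0 ∧
    Efun (tu t₀) = Afun (tu t₀) ∧
    0 < Afun (tu t₀) ∧
    (∀ t : ℝ, 0 < t → Ifun (tu t₀) ≤ Ifun (tu t)) ∧
    Ifun (tu t₀) ≤ Ifun u ∧
    Ifun (tu t₀) < 0 := by
  intro Efun Afun Ifun hE0 hA0 t₀ tu
  have hq0 : (0:ℝ) < q := by linarith
  have hp0 : (0:ℝ) < p := by linarith
  -- scaling laws
  have hEs : ∀ t : ℝ, 0 < t → Efun (tu t) = t ^ p * Efun u := by
    intro t ht
    show (∫ x in Ω, ‖fderiv ℝ (tu t) x‖ ^ p) - lam * ∫ x in Ω, |tu t x| ^ p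
        = t ^ p * ((∫ x in Ω, ‖fderiv ℝ u x‖ ^ p) - lam * ∫ x in Ω, |u x| ^ p)
    have h1 : ∀ x, ‖fderiv ℝ (tu t) x‖ ^ p = t ^ p * ‖fderiv ℝ u x‖ ^ p := by
      intro x
      rw [show fderiv ℝ (tu t) x = t • fderiv ℝ u x from
        fderiv_const_mul_fun u t ht.ne' x, norm_smul, Real.norm_eq_abs, abs_of_pos ht,
        Real.mul_rpow ht.le (norm_nonneg _)]
    have h2 : ∀ x, |tu t x| ^ p = t ^ p * |u x| ^ p := by
      intro x
      show |t * u x| ^ p = t ^ p * |u x| ^ p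
      rw [abs_mul, abs_of_pos ht, Real.mul_rpow ht.le (abs_nonneg _)]
    simp only [h1, h2]
    rw [integral_const_mul, integral_const_mul]
    ring
  have hAs : ∀ t : ℝ, 0 < t → Afun (tu t) = t ^ q * Afun u := by
    intro t ht
    show (∫ x in Ω, a x * |tu t x| ^ q) = t ^ q * ∫ x in Ω, a x * |u x| ^ q
    have h2 : ∀ x, a x * |tu t x| ^ q = t ^ q * (a x * |u x| ^ q) := by
      intro x
      show a x * |t * u x| ^ q = t ^ q * (a x * |u x| ^ q)
      rw [abs_mul, abs_of_pos ht, Real.mul_rpow ht.le (abs_nonneg _)]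
      ring
    simp only [h2]
    rw [integral_const_mul]
  have hAE : 0 < Afun u / Efun u := div_pos hA0 hE0
  have ht₀ : 0 < t₀ := Real.rpow_pos_of_pos hAE _
  have hpq : p - q ≠ 0 := by linarith
  have hkey : t₀ ^ (p - q) = Afun u / Efun u := by
    show ((Afun u / Efun u) ^ (1 / (p - q))) ^ (p - q) = Afun u / Efun u
    rw [← Real.rpow_mul hAE.le, one_div, inv_mul_cancel₀ hpq, Real.rpow_one]
  have hEA : Afun u = t₀ ^ (p - q) * Efun u := by
    rw [hkey]; field_simp
  have htpq : t₀ ^ p = t₀ ^ q * t₀ ^ (p - q) := by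
    rw [← Real.rpow_add ht₀]; ring_nf
  have hNe : t₀ ^ p * Efun u = t₀ ^ q * Afun u := by
    rw [htpq, hEA]; ring
  -- positivity of weight integral
  have hApos : 0 < Afun (tu t₀) := by
    rw [hAs t₀ ht₀]
    exact mul_pos (Real.rpow_pos_of_pos ht₀ q) hA0
  -- the minimality claim
  have hmin : ∀ t : ℝ, 0 < t → Ifun (tu t₀) ≤ Ifun (tu t) := by
    intro t ht
    show (1 / p) * Efun (tu t₀) - (1 / q) * Afun (tu t₀)
        ≤ (1 / p) * Efun (tu t) - (1 / q) * Afun (tu t)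
    rw [hEs t₀ ht₀, hAs t₀ ht₀, hEs t ht, hAs t ht]
    have hs : (0:ℝ) < t / t₀ := div_pos ht ht₀
    have hk := key_ineq hq0 hqp hs.le
    have htp : t ^ p = (t / t₀) ^ p * t₀ ^ p := by
      rw [Real.div_rpow ht.le ht₀.le,
        div_mul_cancel₀ _ (Real.rpow_pos_of_pos ht₀ p).ne']
    have htq : t ^ q = (t / t₀) ^ q * t₀ ^ q := by
      rw [Real.div_rpow ht.le ht₀.le,
        div_mul_cancel₀ _ (Real.rpow_pos_of_pos ht₀ q).ne']
    rw [hEA, htp, htq, htpq]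
    have hC : (0:ℝ) < t₀ ^ q * t₀ ^ (p - q) * Efun u :=
      mul_pos (mul_pos (Real.rpow_pos_of_pos ht₀ q) (Real.rpow_pos_of_pos ht₀ _)) hE0
    have hfin := mul_le_mul_of_nonneg_left hk hC.le
    have e1 : t₀ ^ q * t₀ ^ (p - q) * Efun u * (1/p - 1/q)
        = 1 / p * (t₀ ^ q * t₀ ^ (p - q) * Efun u)
          - 1 / q * (t₀ ^ q * (t₀ ^ (p - q) * Efun u)) := by ring
    have e2 : t₀ ^ q * t₀ ^ (p - q) * Efun u * ((t / t₀) ^ p / p - (t / t₀) ^ q / q)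
        = 1 / p * ((t / t₀) ^ p * (t₀ ^ q * t₀ ^ (p - q)) * Efun u)
          - 1 / q * ((t / t₀) ^ q * t₀ ^ q * (t₀ ^ (p - q) * Efun u)) := by ring
    linarith
  refine ⟨?_, ?_, hApos, hmin, ?_, ?_⟩
  · -- tu t₀ ≠ 0
    intro h
    have hz : Afun (tu t₀) = 0 := by
      show (∫ x in Ω, a x * |tu t₀ x| ^ q) = 0
      rw [h]
      simp [Real.zero_rpow hq0.ne']
    rw [hz] at hApos
    exact lt_irrefl _ hApos
  · -- Nehari identity
    rw [hEs t₀ ht₀, hAs t₀ ht₀]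
    exact hNe
  · -- ≤ Ifun u
    have h1 := hmin 1 one_pos
    have hu1 : tu 1 = u := funext fun x => one_mul _
    rwa [hu1] at h1
  · -- < 0
    show (1 / p) * Efun (tu t₀) - (1 / q) * Afun (tu t₀) < 0
    rw [hEs t₀ ht₀, hAs t₀ ht₀, hNe]
    have hpos : 0 < t₀ ^ q * Afun u := mul_pos (Real.rpow_pos_of_pos ht₀ q) hA0
    have hlt : 1 / p < 1 / q := by
      apply one_div_lt_one_div_of_lt hq0 hqp
    nlinarith
end
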